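/- The images in R of the six monomials 1, u3, u3^2, u2, u2·u3, u2·u3^2 form a basis of R as an F2-vector space, where R is the quotient of F2[u1,u2,u3] by the ideal generated by u1+u2+u3, u1u2+u1u3+u2u3, and u1u2u3. -/

import Mathlib

open MvPolynomial

/-- The ideal generated by the three elementary symmetric polynomials in
`F2[u1,u2,u3]`, with `u1 = X 0`, `u2 = X 1`, `u3 = X 2`. -/
noncomputable abbrev symIdeal : Ideal (MvPolynomial (Fin 3) (ZMod 2)) :=
  Ideal.span ({X 0 + X 1 + X 2,
               X 0 * X 1 + X 0 * X 2 + X 1 * X 2,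
               X 0 * X 1 * X 2} : Set (MvPolynomial (Fin 3) (ZMod 2)))

noncomputable section Aux

/-- `S0 = F2[β]/(β³)`. -/
abbrev S0 : Type := AdjoinRoot (Polynomial.X ^ 3 : Polynomial (ZMod 2))

def βS : S0 := AdjoinRoot.root _

lemma βS_cube : βS ^ 3 = 0 := by
  have := AdjoinRoot.eval₂_root (Polynomial.X ^ 3 : Polynomial (ZMod 2))
  simpa [βS] using this

/-- Power basis of `S0` over `F2`. -/
def bS : Module.Basis (Fin 3) (ZMod 2) S0 :=
  ((AdjoinRoot.powerBasis' (Polynomial.monic_X_pow 3)).basis).reindex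
    (finCongr (by simp))

lemma bS_apply (i : Fin 3) : bS i = βS ^ (i : ℕ) := by
  rw [bS, Module.Basis.reindex_apply, PowerBasis.basis_eq_pow]
  simp [AdjoinRoot.powerBasis'_gen, βS]

instance : Nontrivial S0 := nontrivial_of_ne (bS 0) 0 (bS.ne_zero 0)

/-- The quadratic `X² + β X + β²` over `S0`. -/
def gpoly : Polynomial S0 :=
  Polynomial.X ^ 2 + (Polynomial.C βS * Polynomial.X + Polynomial.C (βS ^ 2))

lemma gpoly_monic : gpoly.Monic := by
  apply Polynomial.monic_X_pow_add
  exact lt_of_le_of_lt Polynomial.degree_linear_le (by norm_num)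

lemma gpoly_natDegree : gpoly.natDegree = 2 := by
  have h : gpoly = Polynomial.C 1 * Polynomial.X ^ 2 + Polynomial.C βS * Polynomial.X
      + Polynomial.C (βS ^ 2) := by
    simp [gpoly]; ring
  rw [h]
  exact Polynomial.natDegree_quadratic one_ne_zero

/-- `A0 = S0[α]/(α² + βα + β²)`, a 6-dimensional `F2`-algebra. -/
abbrev A0 : Type := AdjoinRoot gpoly

def αA : A0 := AdjoinRoot.root _
def βA : A0 := algebraMap S0 A0 βS

lemma βA_cube : βA ^ 3 = 0 := by
  rw [βA, ← map_pow, βS_cube, map_zero]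

lemma αA_rel : αA ^ 2 + βA * αA + βA ^ 2 = 0 := by
  have h := AdjoinRoot.eval₂_root gpoly
  unfold gpoly at h
  simp only [Polynomial.eval₂_add, Polynomial.eval₂_pow, Polynomial.eval₂_mul,
    Polynomial.eval₂_X, Polynomial.eval₂_C, map_pow] at h
  rw [αA, βA, AdjoinRoot.algebraMap_eq]
  unfold gpoly
  exact (add_assoc _ _ _).trans h

/-- Power basis of `A0` over `S0`. -/
def bA : Module.Basis (Fin 2) S0 A0 :=
  ((AdjoinRoot.powerBasis' gpoly_monic).basis).reindex
    (finCongr (by rw [AdjoinRoot.powerBasis'_dim, gpoly_natDegree]))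

lemma bA_apply (j : Fin 2) : bA j = αA ^ (j : ℕ) := by
  rw [bA, Module.Basis.reindex_apply, PowerBasis.basis_eq_pow]
  simp [AdjoinRoot.powerBasis'_gen, αA]

/-- Combined basis of `A0` over `F2`. -/
def bb : Module.Basis (Fin 3 × Fin 2) (ZMod 2) A0 := bS.smulTower bA

lemma bb_apply (i : Fin 3) (j : Fin 2) : bb (i, j) = βA ^ (i : ℕ) * αA ^ (j : ℕ) := by
  rw [bb, Module.Basis.smulTower_apply, bS_apply, bA_apply, Algebra.smul_def, map_pow, βA]

lemma two_A0 : (2 : A0) = 0 := by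
  have h : (2 : A0) = algebraMap (ZMod 2) A0 (2 : ZMod 2) :=
    (map_ofNat (algebraMap (ZMod 2) A0) 2).symm
  rw [h, show (2 : ZMod 2) = 0 from rfl, map_zero]

/-- The evaluation map `F2[u1,u2,u3] → A0`, `u1 ↦ α+β`, `u2 ↦ α`, `u3 ↦ β`. -/
def φ : MvPolynomial (Fin 3) (ZMod 2) →ₐ[ZMod 2] A0 :=
  aeval ![αA + βA, αA, βA]

lemma φ_vanish : ∀ p ∈ symIdeal, φ p = 0 := by
  intro p hp
  have hle : symIdeal ≤ RingHom.ker φ.toRingHom := by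
    rw [Ideal.span_le]
    rintro q hq
    simp only [Set.mem_insert_iff, Set.mem_singleton_iff] at hq
    have hα := αA_rel
    have h2 := two_A0
    have hβ3 := βA_cube
    rcases hq with rfl | rfl | rfl <;>
      simp only [SetLike.mem_coe, RingHom.mem_ker, AlgHom.toRingHom_eq_coe,
        RingHom.coe_coe, φ, map_add, map_mul, aeval_X, Matrix.cons_val_zero,
        Matrix.cons_val_one, Matrix.head_cons, Matrix.cons_val_two, Matrix.tail_cons]
    · linear_combination (αA + βA) * h2
    · linear_combination hα + (αA * βA) * h2
    · linear_combination βA * hα - hβ3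
  exact hle hp

/-- The induced map on the quotient. -/
def φbar : (MvPolynomial (Fin 3) (ZMod 2) ⧸ symIdeal) →ₐ[ZMod 2] A0 :=
  Ideal.Quotient.liftₐ symIdeal φ φ_vanish

/-- The six candidate basis vectors. -/
def vv : Fin 6 → (MvPolynomial (Fin 3) (ZMod 2) ⧸ symIdeal) :=
  ![Ideal.Quotient.mk symIdeal 1,
    Ideal.Quotient.mk symIdeal (X 2),
    Ideal.Quotient.mk symIdeal (X 2 ^ 2),
    Ideal.Quotient.mk symIdeal (X 1),
    Ideal.Quotient.mk symIdeal (X 1 * X 2),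
    Ideal.Quotient.mk symIdeal (X 1 * X 2 ^ 2)]

def σidx : Fin 6 → Fin 3 × Fin 2 :=
  ![(0, 0), (1, 0), (2, 0), (0, 1), (1, 1), (2, 1)]

lemma φbar_mk (p : MvPolynomial (Fin 3) (ZMod 2)) :
    φbar (Ideal.Quotient.mk symIdeal p) = φ p := by
  simp [φbar, Ideal.Quotient.liftₐ_apply, Ideal.Quotient.lift_mk]
  rfl

lemma comp_eq : φbar.toLinearMap ∘ vv = bb ∘ σidx := by
  funext k
  fin_cases k
  · show φbar (Ideal.Quotient.mk symIdeal 1) = bb (0, 0)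
    rw [φbar_mk, bb_apply]; simp [φ]
  · show φbar (Ideal.Quotient.mk symIdeal (X 2)) = bb (1, 0)
    rw [φbar_mk, bb_apply]; simp [φ]
  · show φbar (Ideal.Quotient.mk symIdeal (X 2 ^ 2)) = bb (2, 0)
    rw [φbar_mk, bb_apply]; simp [φ]
  · show φbar (Ideal.Quotient.mk symIdeal (X 1)) = bb (0, 1)
    rw [φbar_mk, bb_apply]; simp [φ]
  · show φbar (Ideal.Quotient.mk symIdeal (X 1 * X 2)) = bb (1, 1)
    rw [φbar_mk, bb_apply]; simp [φ, mul_comm]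
  · show φbar (Ideal.Quotient.mk symIdeal (X 1 * X 2 ^ 2)) = bb (2, 1)
    rw [φbar_mk, bb_apply]; simp [φ, mul_comm]

lemma vv_indep : LinearIndependent (ZMod 2) vv := by
  apply LinearIndependent.of_comp φbar.toLinearMap
  rw [comp_eq]
  exact bb.linearIndependent.comp σidx (by decide)

abbrev Rq := MvPolynomial (Fin 3) (ZMod 2) ⧸ symIdeal

noncomputable abbrev qm : MvPolynomial (Fin 3) (ZMod 2) →+* Rq := Ideal.Quotient.mk symIdeal

lemma two_Rq : (2 : Rq) = 0 := by
  have h : (2 : Rq) = algebraMap (ZMod 2) Rq (2 : ZMod 2) :=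
    (map_ofNat (algebraMap (ZMod 2) Rq) 2).symm
  rw [h, show (2 : ZMod 2) = 0 from rfl, map_zero]

lemma hg1 : qm (X 0) + qm (X 1) + qm (X 2) = 0 := by
  have := Ideal.Quotient.eq_zero_iff_mem.mpr
    (Ideal.subset_span (Set.mem_insert _ _) :
      (X 0 + X 1 + X 2 : MvPolynomial (Fin 3) (ZMod 2)) ∈ symIdeal)
  rw [map_add, map_add] at this
  exact this

lemma hg2 : qm (X 0) * qm (X 1) + qm (X 0) * qm (X 2) + qm (X 1) * qm (X 2) = 0 := by
  have := Ideal.Quotient.eq_zero_iff_mem.mpr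
    (Ideal.subset_span (Set.mem_insert_iff.mpr (Or.inr (Set.mem_insert _ _))) :
      (X 0 * X 1 + X 0 * X 2 + X 1 * X 2 : MvPolynomial (Fin 3) (ZMod 2)) ∈ symIdeal)
  rw [map_add, map_add, map_mul, map_mul, map_mul] at this
  exact this

lemma hg3 : qm (X 0) * qm (X 1) * qm (X 2) = 0 := by
  have := Ideal.Quotient.eq_zero_iff_mem.mpr
    (Ideal.subset_span
      (Set.mem_insert_iff.mpr (Or.inr (Set.mem_insert_iff.mpr (Or.inr rfl)))) :
      (X 0 * X 1 * X 2 : MvPolynomial (Fin 3) (ZMod 2)) ∈ symIdeal)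
  rw [map_mul, map_mul] at this
  exact this

set_option maxHeartbeats 1000000 in
lemma vv_span : ⊤ ≤ Submodule.span (ZMod 2) (Set.range vv) := by
  set V := Submodule.span (ZMod 2) (Set.range vv) with hV
  have hvmem : ∀ k, vv k ∈ V := fun k => Submodule.subset_span ⟨k, rfl⟩
  set x0 := qm (X 0) with hx0
  set x1 := qm (X 1) with hx1
  set x2 := qm (X 2) with hx2
  have h2 := two_Rq
  have e1 : x0 + x1 + x2 = 0 := hg1
  have e2 : x0 * x1 + x0 * x2 + x1 * x2 = 0 := hg2
  have e3 : x0 * x1 * x2 = 0 := hg3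
  -- values of vv
  have hv0 : vv 0 = 1 := by show qm 1 = 1; rw [map_one]
  have hv1 : vv 1 = x2 := rfl
  have hv2 : vv 2 = x2 ^ 2 := by show qm (X 2 ^ 2) = x2 ^ 2; rw [map_pow, hx2]
  have hv3 : vv 3 = x1 := rfl
  have hv4 : vv 4 = x1 * x2 := by
    show qm (X 1 * X 2) = x1 * x2; rw [map_mul, hx1, hx2]
  have hv5 : vv 5 = x1 * x2 ^ 2 := by
    show qm (X 1 * X 2 ^ 2) = x1 * x2 ^ 2; rw [map_mul, map_pow, hx1, hx2]
  -- key relations in the quotient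
  have r0 : x0 = x1 + x2 := by linear_combination e1 - (x1 + x2) * h2
  have rB : x1 ^ 2 = x1 * x2 + x2 ^ 2 := by
    linear_combination (x1 - x2) * e1 - e2 + (x0 * x2) * h2
  have rC : x2 ^ 3 = 0 := by
    linear_combination x2 ^ 2 * e1 - x2 * e2 + e3
  have rD : x1 ^ 2 * x2 = x1 * x2 ^ 2 := by
    linear_combination x2 * rB + rC
  have rE : x1 ^ 2 * x2 ^ 2 = 0 := by
    linear_combination x2 * rD + x1 * rC
  -- closure of V under multiplication by x1 and x2
  have hmul1 : ∀ k, x1 * vv k ∈ V := by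
    intro k
    fin_cases k
    · show x1 * vv 0 ∈ V
      rw [hv0, mul_one, ← hv3]; exact hvmem 3
    · show x1 * vv 1 ∈ V
      rw [hv1, ← hv4]; exact hvmem 4
    · show x1 * vv 2 ∈ V
      rw [hv2, ← hv5]; exact hvmem 5
    · show x1 * vv 3 ∈ V
      rw [hv3, ← sq, rB, ← hv4, ← hv2]
      exact add_mem (hvmem 4) (hvmem 2)
    · show x1 * vv 4 ∈ V
      rw [hv4, ← mul_assoc, ← sq, rD, ← hv5]; exact hvmem 5
    · show x1 * vv 5 ∈ V
      rw [hv5, ← mul_assoc, ← sq, rE]; exact zero_mem V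
  have hmul2 : ∀ k, x2 * vv k ∈ V := by
    intro k
    fin_cases k
    · show x2 * vv 0 ∈ V
      rw [hv0, mul_one, ← hv1]; exact hvmem 1
    · show x2 * vv 1 ∈ V
      rw [hv1, ← sq, ← hv2]; exact hvmem 2
    · show x2 * vv 2 ∈ V
      rw [hv2, show x2 * x2 ^ 2 = x2 ^ 3 by ring, rC]; exact zero_mem V
    · show x2 * vv 3 ∈ V
      rw [hv3, mul_comm, ← hv4]; exact hvmem 4
    · show x2 * vv 4 ∈ V
      rw [hv4, show x2 * (x1 * x2) = x1 * x2 ^ 2 by ring, ← hv5]; exact hvmem 5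
    · show x2 * vv 5 ∈ V
      rw [hv5, show x2 * (x1 * x2 ^ 2) = x1 * x2 ^ 3 by ring, rC, mul_zero]
      exact zero_mem V
  have hmul : ∀ i : Fin 3, ∀ r ∈ V, qm (X i) * r ∈ V := by
    intro i r hr
    induction hr using Submodule.span_induction with
    | mem y hy =>
      obtain ⟨k, rfl⟩ := hy
      fin_cases i
      · show qm (X 0) * vv k ∈ V
        rw [← hx0, r0, add_mul]
        exact add_mem (hmul1 k) (hmul2 k)
      · show qm (X 1) * vv k ∈ V
        rw [← hx1]; exact hmul1 k
      · show qm (X 2) * vv k ∈ V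
        rw [← hx2]; exact hmul2 k
    | zero => rw [mul_zero]; exact zero_mem V
    | add y z _ _ hy hz => rw [mul_add]; exact add_mem hy hz
    | smul a y _ hy => rw [mul_smul_comm]; exact Submodule.smul_mem V a hy
  -- every element of the quotient lies in V
  have hall : ∀ p, qm p ∈ V := by
    intro p
    induction p using MvPolynomial.induction_on with
    | C a =>
      have h1 : qm (C a) = a • (1 : Rq) := by
        rw [show (C a : MvPolynomial (Fin 3) (ZMod 2)) = algebraMap (ZMod 2) _ a from rfl,
          show (qm (algebraMap (ZMod 2) _ a) : Rq) = algebraMap (ZMod 2) Rq a from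
            (IsScalarTower.algebraMap_apply (ZMod 2) (MvPolynomial (Fin 3) (ZMod 2)) Rq a).symm,
          Algebra.algebraMap_eq_smul_one]
      rw [h1, ← hv0]
      exact Submodule.smul_mem V a (hvmem 0)
    | add p q hp hq =>
      rw [map_add]
      exact add_mem hp hq
    | mul_X p i hp =>
      rw [map_mul, mul_comm]
      exact hmul i _ hp
  intro x _
  obtain ⟨p, rfl⟩ := Ideal.Quotient.mk_surjective x
  exact hall p

end Aux

/-- The images in `R = F2[u1,u2,u3]/(e1,e2,e3)` of the six monomials
`1, u3, u3², u2, u2·u3, u2·u3²` form a basis of `R` over `F2`. -/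
theorem stmt3 :
    ∃ b : Module.Basis (Fin 6) (ZMod 2) (MvPolynomial (Fin 3) (ZMod 2) ⧸ symIdeal),
      b 0 = Ideal.Quotient.mk symIdeal 1 ∧
      b 1 = Ideal.Quotient.mk symIdeal (X 2) ∧
      b 2 = Ideal.Quotient.mk symIdeal (X 2 ^ 2) ∧
      b 3 = Ideal.Quotient.mk symIdeal (X 1) ∧
      b 4 = Ideal.Quotient.mk symIdeal (X 1 * X 2) ∧
      b 5 = Ideal.Quotient.mk symIdeal (X 1 * X 2 ^ 2) := by
  refine ⟨Module.Basis.mk vv_indep vv_span, ?_, ?_, ?_, ?_, ?_, ?_⟩ <;>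
    rw [Module.Basis.mk_apply] <;> rfl
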